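/- Let α : ℕ → ℝ satisfy α_n > 0 for all n, suppose the sequence (α_n) converges, and let 0 ≤ q ≤ 1/2. Define β_n = α_n^{1−q} · α_{n+1}^{q}. If (ln β_n)_n is completely alternating, then (ln α_n)_n is completely alternating. (Equivalently: if the generalized Aluthge transform AT_q(W_α) of a weighted shift whose weights approach a limit is moment infinitely divisible, then so is W_α.) -/

import Mathlib

/-- The `n`-th iterated forward difference of a sequence, evaluated at `k`. -/
noncomputable def fdiff (a : ℕ → ℝ) (n k : ℕ) : ℝ :=
  ∑ i ∈ Finset.range (n + 1), (-1 : ℝ) ^ i * (n.choose i : ℝ) * a (k + i)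

/-- A sequence is completely alternating if all iterated forward differences of
order `n ≥ 1` are nonpositive. -/
def CompletelyAlternating (a : ℕ → ℝ) : Prop :=
  ∀ n : ℕ, 1 ≤ n → ∀ k : ℕ, fdiff a n k ≤ 0

open Finset Filter

private lemma fdiff_succ' (a : ℕ → ℝ) (n k : ℕ) :
    fdiff a (n + 1) k = fdiff a n k - fdiff a n (k + 1) := by
  have e1 : fdiff a (n+1) k
      = (∑ i ∈ range (n+1), (-1:ℝ)^(i+1) * (((n+1).choose (i+1) : ℕ) : ℝ) * a (k+(i+1))) + a k := by
    rw [fdiff, Finset.sum_range_succ']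
    simp
  have e2 : fdiff a n k
      = (∑ i ∈ range n, (-1:ℝ)^(i+1) * ((n.choose (i+1) : ℕ) : ℝ) * a (k+(i+1))) + a k := by
    rw [fdiff, Finset.sum_range_succ']
    simp
  have e3 : ∀ i ∈ range (n+1), (-1:ℝ)^(i+1) * (((n+1).choose (i+1) : ℕ) : ℝ) * a (k+(i+1))
      = (-1:ℝ)^(i+1) * ((n.choose (i+1) : ℕ) : ℝ) * a (k+(i+1))
        - (-1:ℝ)^i * ((n.choose i : ℕ) : ℝ) * a ((k+1)+i) := by
    intro i _
    rw [Nat.choose_succ_succ]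
    push_cast
    have h : k + 1 + i = k + (i+1) := by omega
    rw [h]; ring
  have e4 : ∑ i ∈ range (n+1), (-1:ℝ)^(i+1) * ((n.choose (i+1):ℕ):ℝ) * a (k+(i+1))
      = ∑ i ∈ range n, (-1:ℝ)^(i+1) * ((n.choose (i+1):ℕ):ℝ) * a (k+(i+1)) := by
    rw [Finset.sum_range_succ, Nat.choose_succ_self]
    simp
  have e5 : fdiff a n (k+1) = ∑ i ∈ range (n+1), (-1:ℝ)^i * ((n.choose i:ℕ):ℝ) * a ((k+1)+i) := rfl
  rw [e1, Finset.sum_congr rfl e3, Finset.sum_sub_distrib, e4, e5, e2]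
  ring

private lemma fdiff_comb' (a : ℕ → ℝ) (q : ℝ) (n k : ℕ) :
    fdiff (fun m => (1 - q) * a m + q * a (m + 1)) n k
      = (1 - q) * fdiff a n k + q * fdiff a n (k + 1) := by
  unfold fdiff
  rw [Finset.mul_sum, Finset.mul_sum, ← Finset.sum_add_distrib]
  refine Finset.sum_congr rfl fun i _ => ?_
  have h : k + 1 + i = k + i + 1 := by omega
  rw [h]
  ring

private lemma alt_sum_choose_zero' {n : ℕ} (hn : 1 ≤ n) :
    ∑ i ∈ Finset.range (n + 1), (-1 : ℝ) ^ i * (n.choose i : ℝ) = 0 := by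
  have h := Int.alternating_sum_range_choose (n := n)
  rw [if_neg (by omega)] at h
  have h2 : ((∑ i ∈ Finset.range (n + 1), (-1 : ℤ) ^ i * (n.choose i : ℤ) : ℤ) : ℝ) = 0 := by
    rw [h]; norm_num
  push_cast at h2
  exact h2

private lemma fdiff_shift_const' (a : ℕ → ℝ) (c : ℝ) {n : ℕ} (k : ℕ) (hn : 1 ≤ n) :
    fdiff (fun m => a m - c) n k = fdiff a n k := by
  unfold fdiff
  have h : ∀ i ∈ Finset.range (n+1), (-1:ℝ)^i * (n.choose i : ℝ) * ((fun m => a m - c) (k+i))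
      = (-1:ℝ)^i * (n.choose i : ℝ) * a (k+i) - c * ((-1:ℝ)^i * (n.choose i : ℝ)) := by
    intro i _; simp only []; ring
  rw [Finset.sum_congr rfl h, Finset.sum_sub_distrib, ← Finset.mul_sum,
    alt_sum_choose_zero' hn, mul_zero, sub_zero]

private lemma fdiff_abs_le' (a : ℕ → ℝ) (n k : ℕ) :
    |fdiff a n k| ≤ ∑ i ∈ Finset.range (n + 1), (n.choose i : ℝ) * |a (k + i)| := by
  refine (Finset.abs_sum_le_sum_abs _ _).trans ?_
  refine Finset.sum_le_sum fun i _ => ?_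
  rw [abs_mul, abs_mul, abs_pow, abs_neg, abs_one, one_pow, one_mul, Nat.abs_cast]

private lemma key_tendsto' (d : ℕ → ℝ) (hd : Filter.Tendsto d Filter.atTop (nhds 0))
    (hd0 : ∀ j, 0 ≤ d j) :
    Filter.Tendsto (fun N => (1/2:ℝ)^N * ∑ i ∈ Finset.range (N+1), (N.choose i : ℝ) * d i)
      Filter.atTop (nhds 0) := by
  set f : ℕ → ℝ := fun N => (1/2:ℝ)^N * ∑ i ∈ Finset.range (N+1), (N.choose i : ℝ) * d i
    with hfdef
  have hf0 : ∀ N, 0 ≤ f N := fun N =>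
    mul_nonneg (by positivity)
      (Finset.sum_nonneg fun i _ => mul_nonneg (Nat.cast_nonneg _) (hd0 i))
  obtain ⟨D, hD⟩ : ∃ D, ∀ j, d j ≤ D := by
    obtain ⟨D, hD⟩ := hd.bddAbove_range
    exact ⟨D, fun j => hD (Set.mem_range_self j)⟩
  have hD0 : 0 ≤ D := le_trans (hd0 0) (hD 0)
  rw [Metric.tendsto_atTop]
  intro ε hε
  have hε2 : (0:ℝ) < ε/2 := by linarith
  obtain ⟨T, hT⟩ : ∃ T, ∀ j, T ≤ j → d j < ε/2 :=
    Filter.eventually_atTop.1 (hd.eventually (gt_mem_nhds hε2))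
  set g : ℕ → ℝ := fun N => (T:ℝ) * (((N:ℝ)+1)^T * D) * (1/2:ℝ)^N with hgdef
  have hg : Filter.Tendsto g Filter.atTop (nhds 0) := by
    have h1 : Filter.Tendsto (fun N:ℕ => (N:ℝ)^T * (1/2:ℝ)^N) Filter.atTop (nhds 0) :=
      tendsto_pow_const_mul_const_pow_of_lt_one T (by norm_num) (by norm_num)
    have h2 := h1.comp (Filter.tendsto_add_atTop_nat 1)
    have h3 := h2.const_mul ((2:ℝ) * T * D)
    rw [mul_zero] at h3
    convert h3 using 2 with N
    simp only [Function.comp]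
    push_cast
    ring
  obtain ⟨M, hM⟩ : ∃ M, ∀ N, M ≤ N → g N < ε/2 :=
    Filter.eventually_atTop.1 (hg.eventually (gt_mem_nhds hε2))
  refine ⟨max T M, fun N hN => ?_⟩
  have hTN : T ≤ N := le_trans (le_max_left _ _) hN
  have hMN : M ≤ N := le_trans (le_max_right _ _) hN
  have key : f N ≤ g N + ε/2 := by
    have hsplit : ∑ i ∈ Finset.range (N+1), (N.choose i : ℝ) * d i
        = ∑ i ∈ Finset.range T, (N.choose i : ℝ) * d i
          + ∑ i ∈ Finset.Ico T (N+1), (N.choose i : ℝ) * d i := by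
      rw [Finset.range_eq_Ico, Finset.range_eq_Ico]
      exact (Finset.sum_Ico_consecutive (fun i => (N.choose i : ℝ) * d i) (Nat.zero_le T) (show T ≤ N + 1 by omega)).symm
    have part1 : ∑ i ∈ Finset.range T, (N.choose i : ℝ) * d i
        ≤ (T:ℝ) * (((N:ℝ)+1)^T * D) := by
      have each : ∀ i ∈ Finset.range T, (N.choose i : ℝ) * d i ≤ ((N:ℝ)+1)^T * D := by
        intro i hi
        have hiT : i ≤ T := le_of_lt (Finset.mem_range.1 hi)
        have hc : (N.choose i : ℝ) ≤ ((N:ℝ)+1)^T := by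
          have hnat : N.choose i ≤ (N+1)^T :=
            le_trans (Nat.choose_le_pow N i)
              (le_trans (Nat.pow_le_pow_left (Nat.le_succ N) i)
                (Nat.pow_le_pow_right (Nat.succ_le_succ (Nat.zero_le N)) hiT))
          calc (N.choose i : ℝ) ≤ ((N+1)^T : ℕ) := Nat.cast_le.2 hnat
            _ = ((N:ℝ)+1)^T := by push_cast; ring
        exact mul_le_mul hc (hD i) (hd0 i) (by positivity)
      calc ∑ i ∈ Finset.range T, (N.choose i : ℝ) * d i
          ≤ ∑ _i ∈ Finset.range T, ((N:ℝ)+1)^T * D := Finset.sum_le_sum each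
        _ = (T:ℝ) * (((N:ℝ)+1)^T * D) := by
            rw [Finset.sum_const, Finset.card_range, nsmul_eq_mul]
    have part2 : ∑ i ∈ Finset.Ico T (N+1), (N.choose i : ℝ) * d i ≤ (ε/2) * 2^N := by
      have step1 : ∑ i ∈ Finset.Ico T (N+1), (N.choose i : ℝ) * d i
          ≤ ∑ i ∈ Finset.Ico T (N+1), (N.choose i : ℝ) * (ε/2) := by
        refine Finset.sum_le_sum fun i hi => ?_
        exact mul_le_mul_of_nonneg_left (le_of_lt (hT i (Finset.mem_Ico.1 hi).1))
          (Nat.cast_nonneg _)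
      have step2 : ∑ i ∈ Finset.Ico T (N+1), (N.choose i : ℝ) * (ε/2)
          ≤ ∑ i ∈ Finset.range (N+1), (N.choose i : ℝ) * (ε/2) := by
        refine Finset.sum_le_sum_of_subset_of_nonneg ?_ fun i _ _ => by positivity
        rw [Finset.range_eq_Ico]
        exact Finset.Ico_subset_Ico (Nat.zero_le T) le_rfl
      have step3 : ∑ i ∈ Finset.range (N+1), (N.choose i : ℝ) * (ε/2) = (ε/2) * 2^N := by
        rw [← Finset.sum_mul]
        have hs : ∑ i ∈ Finset.range (N+1), (N.choose i : ℝ) = (2:ℝ)^N := by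
          have h := Nat.sum_range_choose N
          calc ∑ i ∈ Finset.range (N+1), (N.choose i : ℝ)
              = ((∑ i ∈ Finset.range (N+1), N.choose i : ℕ) : ℝ) := by push_cast; ring
            _ = (2:ℝ)^N := by rw [h]; push_cast; ring
        rw [hs]; ring
      linarith
    have hpow : (1/2:ℝ)^N * 2^N = 1 := by
      rw [← mul_pow]; norm_num
    have hfle : f N ≤ (1/2:ℝ)^N * ((T:ℝ) * (((N:ℝ)+1)^T * D) + (ε/2) * 2^N) := by
      rw [hfdef]
      simp only []
      rw [hsplit]
      have h12 : (0:ℝ) ≤ (1/2:ℝ)^N := by positivity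
      exact mul_le_mul_of_nonneg_left (by linarith) h12
    calc f N ≤ (1/2:ℝ)^N * ((T:ℝ) * (((N:ℝ)+1)^T * D) + (ε/2) * 2^N) := hfle
      _ = g N + (ε/2) * ((1/2:ℝ)^N * 2^N) := by rw [hgdef]; ring
      _ = g N + ε/2 := by rw [hpow]; ring
  rw [Real.dist_eq, sub_zero, abs_of_nonneg (hf0 N)]
  calc f N ≤ g N + ε/2 := key
    _ < ε/2 + ε/2 := by linarith [hM N hMN]
    _ = ε := by ring

private lemma fdiff_recur' (a b : ℕ → ℝ) (q : ℝ)
    (hb : ∀ N k, fdiff b N k = fdiff a N k - q * fdiff a (N+1) k)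
    (n k : ℕ) : ∀ m,
    fdiff a n k = (∑ j ∈ range m, q^j * fdiff b (n+j) k) + q^m * fdiff a (n+m) k := by
  intro m
  induction m with
  | zero => simp
  | succ m ih =>
    have h := hb (n+m) k
    have hnm : n + (m+1) = n + m + 1 := by omega
    rw [Finset.sum_range_succ, hnm, ih, pow_succ]
    have hA : fdiff a (n+m) k = fdiff b (n+m) k + q * fdiff a (n+m+1) k := by linarith
    rw [hA]
    ring

theorem stmt9 (α : ℕ → ℝ) (hα : ∀ n, 0 < α n)
    (hlim : ∃ L : ℝ, Filter.Tendsto α Filter.atTop (nhds L))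
    (q : ℝ) (hq0 : 0 ≤ q) (hq2 : q ≤ 1 / 2)
    (hβ : CompletelyAlternating
      (fun n => Real.log (α n ^ (1 - q) * α (n + 1) ^ q))) :
    CompletelyAlternating (fun n => Real.log (α n)) := by
  obtain ⟨L, hL⟩ := hlim
  set a : ℕ → ℝ := fun n => Real.log (α n) with hadef
  have hbfun : (fun n => Real.log (α n ^ (1-q) * α (n+1) ^ q))
      = fun n => (1-q) * a n + q * a (n+1) := by
    funext n
    rw [Real.log_mul (Real.rpow_pos_of_pos (hα n) _).ne' (Real.rpow_pos_of_pos (hα (n+1)) _).ne',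
      Real.log_rpow (hα n), Real.log_rpow (hα (n+1))]
  rw [hbfun] at hβ
  set b : ℕ → ℝ := fun n => (1-q) * a n + q * a (n+1) with hbdef
  have hstep : ∀ N k, fdiff b N k = fdiff a N k - q * fdiff a (N+1) k := by
    intro N k
    rw [hbdef, fdiff_comb' a q N k, fdiff_succ' a N k]
    ring
  -- L is positive
  have hL0 : 0 ≤ L := ge_of_tendsto' hL fun n => (hα n).le
  have hLpos : 0 < L := by
    rcases hL0.lt_or_eq with h | h
    · exact h
    exfalso
    -- b is monotone, hence β is bounded below, but β → 0
    have hb1 : ∀ j, b j ≤ b (j+1) := by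
      intro j
      have h1 := hβ 1 le_rfl j
      have h2 : fdiff b 1 j = b j - b (j+1) := by
        simp [fdiff, Finset.sum_range_succ]
        ring
      rw [h2] at h1
      linarith
    have hbmono : Monotone b := monotone_nat_of_le_succ hb1
    set B : ℕ → ℝ := fun j => α j ^ (1-q) * α (j+1) ^ q with hBdef
    have hBb : ∀ j, b j = Real.log (B j) := fun j => (congrFun hbfun j).symm
    have hBmono : ∀ j, B 0 ≤ B j := by
      intro j
      have := hbmono (Nat.zero_le j)
      rw [hBb 0, hBb j] at this
      exact (Real.log_le_log_iff (mul_pos (Real.rpow_pos_of_pos (hα 0) _)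
        (Real.rpow_pos_of_pos (hα 1) _)) (mul_pos (Real.rpow_pos_of_pos (hα j) _)
        (Real.rpow_pos_of_pos (hα (j+1)) _))).1 this
    have hα0 : Filter.Tendsto α Filter.atTop (nhds 0) := by rw [← h] at hL; exact hL
    have h1 : Filter.Tendsto (fun j => α j ^ (1-q)) Filter.atTop (nhds 0) := by
      have hc : ContinuousAt (fun x : ℝ => x ^ (1-q)) 0 :=
        Real.continuousAt_rpow_const 0 (1-q) (Or.inr (by linarith))
      have := hc.tendsto.comp hα0
      rwa [Real.zero_rpow (by intro hz; linarith : (1:ℝ)-q ≠ 0)] at this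
    have h2 : Filter.Tendsto (fun j => α (j+1) ^ q) Filter.atTop (nhds ((0:ℝ) ^ q)) := by
      have hc : ContinuousAt (fun x : ℝ => x ^ q) 0 :=
        Real.continuousAt_rpow_const 0 q (Or.inr hq0)
      exact hc.tendsto.comp (hα0.comp (Filter.tendsto_add_atTop_nat 1))
    have hB0 : Filter.Tendsto B Filter.atTop (nhds 0) := by
      have := h1.mul h2
      rwa [zero_mul] at this
    have hle : B 0 ≤ 0 := ge_of_tendsto' hB0 hBmono
    exact absurd hle (not_le.2 (mul_pos (Real.rpow_pos_of_pos (hα 0) _)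
      (Real.rpow_pos_of_pos (hα 1) _)))
  -- a tends to log L
  have ha_tendsto : Filter.Tendsto a Filter.atTop (nhds (Real.log L)) :=
    ((Real.continuousAt_log hLpos.ne').tendsto).comp hL
  intro n hn k
  have hrec := fdiff_recur' a b q hstep n k
  have hle : ∀ m, fdiff a n k ≤ q^m * fdiff a (n+m) k := by
    intro m
    rw [hrec m]
    have hs : ∑ j ∈ range m, q^j * fdiff b (n+j) k ≤ 0 :=
      Finset.sum_nonpos fun j _ =>
        mul_nonpos_of_nonneg_of_nonpos (pow_nonneg hq0 j) (hβ (n+j) (by omega) k)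
    linarith
  set c : ℝ := Real.log L with hcdef
  set d : ℕ → ℝ := fun i => |a (k + i) - c| with hddef
  have hd0 : ∀ i, 0 ≤ d i := fun i => abs_nonneg _
  have hd : Filter.Tendsto d Filter.atTop (nhds 0) := by
    have h1 : Filter.Tendsto (fun i => a (k + i)) Filter.atTop (nhds c) := by
      have := ha_tendsto.comp (Filter.tendsto_add_atTop_nat k)
      have heq : (a ∘ fun i => i + k) = fun i => a (k + i) := by
        funext i; simp [Function.comp, Nat.add_comm]
      rwa [heq] at this
    have h2 := (h1.sub_const c).abs
    simpa using h2
  have htend : Filter.Tendsto (fun m => q^m * fdiff a (n+m) k) Filter.atTop (nhds 0) := by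
    have hkey := key_tendsto' d hd hd0
    have hgt : Filter.Tendsto
        (fun m => (2:ℝ)^n * ((1/2:ℝ)^(n+m) * ∑ i ∈ Finset.range (n+m+1),
          ((n+m).choose i : ℝ) * d i)) Filter.atTop (nhds 0) := by
      have := (hkey.comp (Filter.tendsto_add_atTop_nat n)).const_mul ((2:ℝ)^n)
      rw [mul_zero] at this
      have heq : ((fun N => (1/2:ℝ)^N * ∑ i ∈ Finset.range (N+1), (N.choose i : ℝ) * d i)
          ∘ fun m => m + n) = fun m => (1/2:ℝ)^(n+m) * ∑ i ∈ Finset.range (n+m+1),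
            ((n+m).choose i : ℝ) * d i := by
        funext m; simp [Function.comp, Nat.add_comm]
      rwa [heq] at this
    refine squeeze_zero_norm (fun m => ?_) hgt
    -- ‖q^m * fdiff a (n+m) k‖ ≤ 2^n * ((1/2)^(n+m) * ∑ ...)
    have hq12 : q^m ≤ (1/2:ℝ)^m := pow_le_pow_left₀ hq0 hq2 m
    have habs : |fdiff a (n+m) k| ≤ ∑ i ∈ Finset.range (n+m+1), ((n+m).choose i : ℝ) * d i := by
      have hsh := fdiff_shift_const' a c (n := n+m) k (by omega)
      have := fdiff_abs_le' (fun j => a j - c) (n+m) k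
      rw [hsh] at this
      exact this
    have hsum0 : 0 ≤ ∑ i ∈ Finset.range (n+m+1), ((n+m).choose i : ℝ) * d i :=
      Finset.sum_nonneg fun i _ => mul_nonneg (Nat.cast_nonneg _) (hd0 i)
    rw [norm_mul, Real.norm_eq_abs, Real.norm_eq_abs, abs_of_nonneg (pow_nonneg hq0 m)]
    have hmul : q^m * |fdiff a (n+m) k|
        ≤ (1/2:ℝ)^m * ∑ i ∈ Finset.range (n+m+1), ((n+m).choose i : ℝ) * d i :=
      mul_le_mul hq12 habs (abs_nonneg _) (by positivity)
    have hpoweq : (2:ℝ)^n * ((1/2:ℝ)^(n+m) * ∑ i ∈ Finset.range (n+m+1),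
        ((n+m).choose i : ℝ) * d i) = (1/2:ℝ)^m * ∑ i ∈ Finset.range (n+m+1),
          ((n+m).choose i : ℝ) * d i := by
      have : (2:ℝ)^n * (1/2:ℝ)^(n+m) = (1/2:ℝ)^m := by
        rw [pow_add, ← mul_assoc, ← mul_pow]
        norm_num
      rw [← this]; ring
    rw [hpoweq]
    exact hmul
  exact ge_of_tendsto' htend hle
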